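/- Let f be Legendre on ℝ^J with Bregman distance D, C ⊆ U = int dom f nonempty compact, and x ∈ U. Then ∂F_C(x) = ∇f(x) - conv(∇f(Q_C(x))), where F_C(x) = sup_{c∈C} D(x,c) and Q_C(x) = argmax_{c∈C} D(x,c). -/

import Mathlib

open Set Filter Topology Bornology

noncomputable section

/-- Data for a Bregman setup on `ℝ^J`: an extended-real-valued function `f`
together with a choice of gradient map (meaningful on the interior of the domain). -/
structure BregmanSetup (J : ℕ) where
  f : EuclideanSpace ℝ (Fin J) → EReal
  grad : EuclideanSpace ℝ (Fin J) → EuclideanSpace ℝ (Fin J)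

namespace BregmanSetup

open scoped Classical

variable {J : ℕ} (B : BregmanSetup J)

/-- The (essential) domain of `f`. -/
def dom : Set (EuclideanSpace ℝ (Fin J)) := {x | B.f x ≠ ⊤}

/-- `U`, the interior of the domain of `f`. -/
def U : Set (EuclideanSpace ℝ (Fin J)) := interior B.dom

/-- `f` is a convex function of Legendre type: proper, lsc, convex,
essentially smooth (differentiable on `U` with gradient `B.grad`, steep at the
boundary) and essentially strictly convex (strictly convex on `U`). -/
structure IsLegendre : Prop where
  proper_bot : ∀ x, B.f x ≠ ⊥
  nonempty_int : B.U.Nonempty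
  convex_dom : Convex ℝ B.dom
  convexOn : ConvexOn ℝ B.dom (fun x => (B.f x).toReal)
  lsc : LowerSemicontinuous B.f
  smooth : ∀ y ∈ B.U, HasGradientAt (fun x => (B.f x).toReal) (B.grad y) y
  strict : StrictConvexOn ℝ B.U (fun x => (B.f x).toReal)
  steep : ∀ x ∈ frontier B.dom, ∀ s : ℕ → EuclideanSpace ℝ (Fin J),
    (∀ n, s n ∈ B.U) → Tendsto s atTop (nhds x) →
    Tendsto (fun n => ‖B.grad (s n)‖) atTop atTop

/-- The Bregman distance `D(x,y) = f(x) - f(y) - ⟨∇f(y), x - y⟩` for `y ∈ U`,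
and `+∞` otherwise. -/
def D (x y : EuclideanSpace ℝ (Fin J)) : EReal :=
  if y ∈ B.U then B.f x - B.f y - ((inner ℝ (B.grad y) (x - y) : ℝ) : EReal) else ⊤

/-- The right Bregman farthest-distance function of a set `C`. -/
def F (C : Set (EuclideanSpace ℝ (Fin J))) (x : EuclideanSpace ℝ (Fin J)) : EReal :=
  ⨆ c ∈ C, B.D x c

/-- The right Bregman farthest-point map of a set `C` (empty outside `dom f`). -/
def Q (C : Set (EuclideanSpace ℝ (Fin J))) (x : EuclideanSpace ℝ (Fin J)) :
    Set (EuclideanSpace ℝ (Fin J)) :=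
  {c | c ∈ C ∧ x ∈ B.dom ∧ ∀ c' ∈ C, B.D x c' ≤ B.D x c}

end BregmanSetup

-- ###################  AUX  ###################

namespace BregmanSetup

variable {J : ℕ} {B : BregmanSetup J}

/-- The real-valued version of `f`. -/
def phi (B : BregmanSetup J) (z : EuclideanSpace ℝ (Fin J)) : ℝ := (B.f z).toReal

lemma isOpen_U : IsOpen B.U := isOpen_interior

lemma U_subset_dom : B.U ⊆ B.dom := interior_subset

lemma f_eq_coe (hB : B.IsLegendre) {z : EuclideanSpace ℝ (Fin J)} (hz : z ∈ B.dom) :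
    B.f z = (B.phi z : EReal) := (EReal.coe_toReal hz (hB.proper_bot z)).symm

lemma smooth' (hB : B.IsLegendre) {y : EuclideanSpace ℝ (Fin J)} (hy : y ∈ B.U) :
    HasGradientAt B.phi (B.grad y) y := hB.smooth y hy

lemma phi_contAt (hB : B.IsLegendre) {y : EuclideanSpace ℝ (Fin J)} (hy : y ∈ B.U) :
    ContinuousAt B.phi y :=
  (smooth' hB hy).differentiableAt.continuousAt

lemma dirDeriv (hB : B.IsLegendre) {y : EuclideanSpace ℝ (Fin J)} (hy : y ∈ B.U)
    (d : EuclideanSpace ℝ (Fin J)) :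
    HasDerivAt (fun t : ℝ => B.phi (y + t • d)) (inner ℝ (B.grad y) d : ℝ) 0 := by
  have h1 : HasDerivAt (fun t : ℝ => y + t • d) d 0 := by
    simpa using ((hasDerivAt_id (0:ℝ)).smul_const d).const_add y
  have h3 : HasFDerivAt B.phi ((InnerProductSpace.toDual ℝ _ (B.grad y) : _)) y :=
    smooth' hB hy
  have hy0 : y + (0:ℝ) • d = y := by simp
  rw [← hy0] at h3
  have h4 := h3.comp_hasDerivAt 0 h1
  simp [InnerProductSpace.toDual_apply_apply, Function.comp] at h4
  exact h4

lemma grad_ineq (hB : B.IsLegendre) {y z : EuclideanSpace ℝ (Fin J)} (hy : y ∈ B.U)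
    (hz : z ∈ B.dom) :
    B.phi y + inner ℝ (B.grad y) (z - y) ≤ B.phi z := by
  set g : ℝ → ℝ := fun t => B.phi (y + t • (z - y)) with hg
  have hyd : y ∈ B.dom := U_subset_dom hy
  have key : ∀ t : ℝ, t ∈ Ioc (0:ℝ) 1 → slope g 0 t ≤ B.phi z - B.phi y := by
    intro t ht
    have hmem : y + t • (z - y) = (1 - t) • y + t • z := by
      rw [smul_sub, sub_smul, one_smul]; abel
    have hconv := hB.convexOn.2 hyd hz (by linarith [ht.2] : (0:ℝ) ≤ 1 - t) ht.1.le
      (by ring : (1 - t) + t = 1)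
    have hgt : g t ≤ (1 - t) * B.phi y + t * B.phi z := by
      rw [hg]; simp only [hmem]; exact hconv
    have hg0 : g 0 = B.phi y := by simp [hg]
    rw [slope_def_field, hg0, sub_zero, div_le_iff₀ ht.1]
    nlinarith [hgt]
  have hder := dirDeriv hB hy (z - y)
  have hslope : Tendsto (slope g 0) (𝓝[>] (0:ℝ)) (𝓝 (inner ℝ (B.grad y) (z - y) : ℝ)) :=
    (hasDerivAt_iff_tendsto_slope.1 hder).mono_left
      (nhdsWithin_mono 0 (fun t (ht : t ∈ Ioi (0:ℝ)) => (ne_of_gt ht : t ≠ 0)))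
  have hev : ∀ᶠ t in 𝓝[>] (0:ℝ), slope g 0 t ≤ B.phi z - B.phi y :=
    eventually_of_mem (Ioc_mem_nhdsGT_of_mem ⟨le_refl _, one_pos⟩) key
  have := le_of_tendsto hslope hev
  linarith

lemma phi_contOn (hB : B.IsLegendre) : ContinuousOn B.phi B.U :=
  fun _ hy => (phi_contAt hB hy).continuousWithinAt

lemma grad_norm_le (hB : B.IsLegendre) {y : EuclideanSpace ℝ (Fin J)} (hy : y ∈ B.U)
    {ε M : ℝ} (hε : 0 < ε) (hball : Metric.closedBall y ε ⊆ B.dom)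
    (hM : ∀ z ∈ Metric.closedBall y ε, |B.phi z| ≤ M) :
    ‖B.grad y‖ ≤ 2 * M / ε := by
  have hyM := hM y (Metric.mem_closedBall_self hε.le)
  have hM0 : 0 ≤ M := (abs_nonneg _).trans hyM
  rcases eq_or_ne (B.grad y) 0 with h | h
  · rw [h]; simpa using by positivity
  · set z := y + (ε / ‖B.grad y‖) • B.grad y with hzdef
    have hng : 0 < ‖B.grad y‖ := norm_pos_iff.2 h
    have hzball : z ∈ Metric.closedBall y ε := by
      rw [Metric.mem_closedBall, dist_eq_norm, hzdef]
      have : y + (ε / ‖B.grad y‖) • B.grad y - y = (ε / ‖B.grad y‖) • B.grad y := by abel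
      rw [this, norm_smul]
      rw [Real.norm_eq_abs, abs_of_pos (by positivity)]
      rw [div_mul_cancel₀ _ hng.ne']
    have hineq := grad_ineq hB hy (hball hzball)
    have hinner : (inner ℝ (B.grad y) (z - y) : ℝ) = ε * ‖B.grad y‖ := by
      have : z - y = (ε / ‖B.grad y‖) • B.grad y := by rw [hzdef]; abel
      rw [this, real_inner_smul_right, real_inner_self_eq_norm_sq]
      field_simp
    have hzM := hM z hzball
    have hkey : ε * ‖B.grad y‖ ≤ 2 * M := by
      have h1 : B.phi z ≤ M := (le_abs_self _).trans hzM
      have h2 : -M ≤ B.phi y := neg_le_of_abs_le hyM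
      rw [hinner] at hineq
      linarith
    rw [le_div_iff₀ hε]
    linarith

lemma grad_bdd (hB : B.IsLegendre) {K : Set (EuclideanSpace ℝ (Fin J))}
    (hK : IsCompact K) (hKU : K ⊆ B.U) : ∃ M, ∀ c ∈ K, ‖B.grad c‖ ≤ M := by
  rcases K.eq_empty_or_nonempty with rfl | hKne
  · exact ⟨0, by simp⟩
  obtain ⟨δ, hδ, hthick⟩ := hK.exists_thickening_subset_open isOpen_U hKU
  have hK' : IsCompact (Metric.cthickening (δ/2) K) := hK.cthickening
  have hK'U : Metric.cthickening (δ/2) K ⊆ B.U :=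
    (Metric.cthickening_subset_thickening' hδ (by linarith) K).trans hthick
  obtain ⟨M, hM⟩ := hK'.exists_bound_of_continuousOn ((phi_contOn hB).mono hK'U)
  refine ⟨2 * M / (δ/2), fun c hc => grad_norm_le hB (hKU hc) (by linarith) ?_ ?_⟩
  · exact (Metric.closedBall_subset_cthickening hc (δ/2)).trans (hK'U.trans U_subset_dom)
  · intro z hz
    exact hM z (Metric.closedBall_subset_cthickening hc (δ/2) hz)

lemma subgrad_unique (hB : B.IsLegendre) {c : EuclideanSpace ℝ (Fin J)} (hc : c ∈ B.U)
    (g : EuclideanSpace ℝ (Fin J))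
    (hg : ∀ z ∈ B.dom, B.phi c + inner ℝ g (z - c) ≤ B.phi z) : g = B.grad c := by
  have key : ∀ d : EuclideanSpace ℝ (Fin J), (inner ℝ g d : ℝ) ≤ inner ℝ (B.grad c) d := by
    intro d
    set q : ℝ → ℝ := fun t => B.phi (c + t • d) with hq
    have hder := dirDeriv hB hc d
    have hslope : Tendsto (slope q 0) (𝓝[>] (0:ℝ)) (𝓝 (inner ℝ (B.grad c) d : ℝ)) :=
      (hasDerivAt_iff_tendsto_slope.1 hder).mono_left
        (nhdsWithin_mono 0 (fun t (ht : t ∈ Ioi (0:ℝ)) => (ne_of_gt ht : t ≠ 0)))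
    have hmem : ∀ᶠ t in 𝓝 (0:ℝ), c + t • d ∈ B.U := by
      have hcont : Continuous fun t : ℝ => c + t • d := by continuity
      have := hcont.tendsto 0
      simp only [zero_smul, add_zero] at this
      exact this (isOpen_U.mem_nhds hc)
    have hev : ∀ᶠ t in 𝓝[>] (0:ℝ), (inner ℝ g d : ℝ) ≤ slope q 0 t := by
      filter_upwards [nhdsWithin_le_nhds hmem, self_mem_nhdsWithin] with t htU (htpos : t ∈ Ioi (0:ℝ))
      have := hg (c + t • d) (U_subset_dom htU)
      rw [slope_def_field]
      have hq0 : q 0 = B.phi c := by simp [hq]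
      rw [hq0, sub_zero, le_div_iff₀ htpos]
      have hin : (inner ℝ g (c + t • d - c) : ℝ) = t * inner ℝ g d := by
        have : c + t • d - c = t • d := by abel
        rw [this, real_inner_smul_right]
      rw [hin] at this
      simp only [hq]
      linarith
    exact ge_of_tendsto hslope hev
  have h2 := key (g - B.grad c)
  have h3 : (inner ℝ (g - B.grad c) (g - B.grad c) : ℝ) ≤ 0 := by
    rw [inner_sub_left]; linarith
  have h4 : g - B.grad c = 0 := by
    have := real_inner_self_nonpos.1 h3
    exact this
  rw [sub_eq_zero] at h4; exact h4

set_option maxHeartbeats 1000000 in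
lemma grad_contOn (hB : B.IsLegendre) : ContinuousOn B.grad B.U := by
  intro c hc
  obtain ⟨r, hr, hball⟩ : ∃ r > 0, Metric.closedBall c r ⊆ B.U :=
    (Metric.nhds_basis_closedBall.mem_iff.1 (isOpen_U.mem_nhds hc)).imp
      (fun r h => ⟨h.1, h.2⟩)
  obtain ⟨M, hM⟩ := grad_bdd hB (isCompact_closedBall c r) hball
  rw [ContinuousWithinAt]
  rw [tendsto_iff_seq_tendsto]
  intro u hu
  have huU : ∀ᶠ n in atTop, u n ∈ B.U ∩ Metric.closedBall c r := by
    refine Eventually.and (hu self_mem_nhdsWithin) ?_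
    exact (hu.mono_right nhdsWithin_le_nhds) (Metric.closedBall_mem_nhds c hr)
  have hulim : Tendsto u atTop (𝓝 c) := hu.mono_right nhdsWithin_le_nhds
  obtain ⟨N, hN⟩ := eventually_atTop.1 huU
  apply tendsto_of_subseq_tendsto
  intro ns hns
  obtain ⟨N', hN'⟩ := eventually_atTop.1 (hns.eventually_ge_atTop N)
  set y : ℕ → EuclideanSpace ℝ (Fin J) := fun k => B.grad (u (ns (k + N'))) with hy
  have hybdd : ∀ k, y k ∈ Metric.closedBall 0 M := by
    intro k
    have hk := hN _ (hN' (k + N') (by omega))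
    simpa [hy, Metric.mem_closedBall, dist_eq_norm] using hM _ hk.2
  obtain ⟨a, _, σ, hσmono, hσlim⟩ :=
    tendsto_subseq_of_bounded (Metric.isBounded_closedBall (x := (0 : EuclideanSpace ℝ (Fin J))) (r := M)) hybdd
  have hnsσ : Tendsto (fun k => ns (σ k + N')) atTop atTop :=
    hns.comp (tendsto_atTop_mono (fun k => le_trans hσmono.le_apply (Nat.le_add_right _ _)) tendsto_id)
  have huσ : Tendsto (fun k => u (ns (σ k + N'))) atTop (𝓝 c) := hulim.comp hnsσ
  have huσU : ∀ k, u (ns (σ k + N')) ∈ B.U := by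
    intro k
    exact (hN _ (hN' (σ k + N') (by omega))).1
  have ha : a = B.grad c := by
    apply subgrad_unique hB hc
    intro z hz
    have hineq : ∀ k, B.phi (u (ns (σ k + N'))) +
        inner ℝ (B.grad (u (ns (σ k + N')))) (z - u (ns (σ k + N'))) ≤ B.phi z :=
      fun k => grad_ineq hB (huσU k) hz
    have h1 : Tendsto (fun k => B.phi (u (ns (σ k + N')))) atTop (𝓝 (B.phi c)) :=
      (phi_contAt hB hc).tendsto.comp huσ
    have hgl : Tendsto (fun k => B.grad (u (ns (σ k + N')))) atTop (𝓝 a) := hσlim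
    have h2 : Tendsto
        (fun k => (inner ℝ (B.grad (u (ns (σ k + N')))) (z - u (ns (σ k + N'))) : ℝ))
        atTop (𝓝 (inner ℝ a (z - c))) :=
      hgl.inner (tendsto_const_nhds.sub huσ)
    exact le_of_tendsto (h1.add h2) (Eventually.of_forall hineq)
  refine ⟨fun k => σ k + N', ?_⟩
  rw [← ha]
  exact hσlim

/-- The real-valued Bregman distance. -/
def rr (B : BregmanSetup J) (z c : EuclideanSpace ℝ (Fin J)) : ℝ :=
  B.phi z - B.phi c - inner ℝ (B.grad c) (z - c)

lemma rr_contOn_c (hB : B.IsLegendre) (z : EuclideanSpace ℝ (Fin J)) :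
    ContinuousOn (fun c => B.rr z c) B.U := by
  apply ContinuousOn.sub
  · exact continuousOn_const.sub (phi_contOn hB)
  · exact (grad_contOn hB).inner (continuousOn_const.sub continuousOn_id)

lemma rr_contOn_z (hB : B.IsLegendre) (c : EuclideanSpace ℝ (Fin J)) :
    ContinuousOn (fun z => B.rr z c) B.U := by
  apply ContinuousOn.sub
  · exact (phi_contOn hB).sub continuousOn_const
  · exact continuousOn_const.inner (continuousOn_id.sub continuousOn_const)

lemma rr_contOn_joint (hB : B.IsLegendre) :
    ContinuousOn (fun q : EuclideanSpace ℝ (Fin J) × EuclideanSpace ℝ (Fin J) => B.rr q.1 q.2)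
      (B.U ×ˢ B.U) := by
  have h1 : ContinuousOn (fun q : EuclideanSpace ℝ (Fin J) × EuclideanSpace ℝ (Fin J) => B.phi q.1)
      (B.U ×ˢ B.U) := (phi_contOn hB).comp continuousOn_fst (fun q hq => hq.1)
  have h2 : ContinuousOn (fun q : EuclideanSpace ℝ (Fin J) × EuclideanSpace ℝ (Fin J) => B.phi q.2)
      (B.U ×ˢ B.U) := (phi_contOn hB).comp continuousOn_snd (fun q hq => hq.2)
  have h3 : ContinuousOn (fun q : EuclideanSpace ℝ (Fin J) × EuclideanSpace ℝ (Fin J) => B.grad q.2)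
      (B.U ×ˢ B.U) := (grad_contOn hB).comp continuousOn_snd (fun q hq => hq.2)
  exact (h1.sub h2).sub (h3.inner (continuousOn_fst.sub continuousOn_snd))

lemma D_eq (hB : B.IsLegendre) {z c : EuclideanSpace ℝ (Fin J)} (hz : z ∈ B.dom) (hc : c ∈ B.U) :
    B.D z c = (B.rr z c : EReal) := by
  rw [D, if_pos hc, f_eq_coe hB hz, f_eq_coe hB (U_subset_dom hc), rr]
  push_cast
  rfl

lemma D_top (hB : B.IsLegendre) {z c : EuclideanSpace ℝ (Fin J)} (hz : z ∉ B.dom) (hc : c ∈ B.U) :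
    B.D z c = ⊤ := by
  have hfz : B.f z = ⊤ := not_not.1 hz
  rw [D, if_pos hc, hfz, f_eq_coe hB (U_subset_dom hc), EReal.top_sub_coe, EReal.top_sub_coe]

section C
variable {C : Set (EuclideanSpace ℝ (Fin J))}

lemma exists_max (hB : B.IsLegendre) (hCne : C.Nonempty) (hCU : C ⊆ B.U) (hCcomp : IsCompact C)
    (z : EuclideanSpace ℝ (Fin J)) : ∃ c₀ ∈ C, ∀ c ∈ C, B.rr z c ≤ B.rr z c₀ := by
  obtain ⟨c₀, hc₀, hmax⟩ := hCcomp.exists_isMaxOn hCne ((rr_contOn_c hB z).mono hCU)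
  exact ⟨c₀, hc₀, fun c hc => hmax hc⟩

lemma F_eq_of_max (hB : B.IsLegendre) (hCU : C ⊆ B.U) {z c₀ : EuclideanSpace ℝ (Fin J)}
    (hz : z ∈ B.dom) (hc₀ : c₀ ∈ C) (hmax : ∀ c ∈ C, B.rr z c ≤ B.rr z c₀) :
    B.F C z = (B.rr z c₀ : EReal) := by
  apply le_antisymm
  · apply iSup₂_le
    intro c hc
    rw [D_eq hB hz (hCU hc)]
    exact_mod_cast hmax c hc
  · rw [← D_eq hB hz (hCU hc₀)]
    exact le_iSup₂ (f := fun c _ => B.D z c) c₀ hc₀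

lemma F_top (hB : B.IsLegendre) (hCne : C.Nonempty) (hCU : C ⊆ B.U)
    {z : EuclideanSpace ℝ (Fin J)} (hz : z ∉ B.dom) : B.F C z = ⊤ := by
  obtain ⟨c₀, hc₀⟩ := hCne
  apply top_le_iff.1
  rw [← D_top hB hz (hCU hc₀)]
  exact le_iSup₂ (f := fun c _ => B.D z c) c₀ hc₀

lemma Q_iff (hB : B.IsLegendre) (hCU : C ⊆ B.U) {x c : EuclideanSpace ℝ (Fin J)}
    (hx : x ∈ B.dom) :
    c ∈ B.Q C x ↔ c ∈ C ∧ ∀ c' ∈ C, B.rr x c' ≤ B.rr x c := by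
  constructor
  · rintro ⟨hc, -, h⟩
    refine ⟨hc, fun c' hc' => ?_⟩
    have := h c' hc'
    rw [D_eq hB hx (hCU hc'), D_eq hB hx (hCU hc)] at this
    exact_mod_cast this
  · rintro ⟨hc, h⟩
    refine ⟨hc, hx, fun c' hc' => ?_⟩
    rw [D_eq hB hx (hCU hc'), D_eq hB hx (hCU hc)]
    exact_mod_cast h c' hc'

lemma Q_subset : B.Q C x ⊆ C := fun _ hc => hc.1

lemma Q_nonempty (hB : B.IsLegendre) (hCne : C.Nonempty) (hCU : C ⊆ B.U) (hCcomp : IsCompact C)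
    {x : EuclideanSpace ℝ (Fin J)} (hx : x ∈ B.dom) : (B.Q C x).Nonempty := by
  obtain ⟨c₀, hc₀, hmax⟩ := exists_max hB hCne hCU hCcomp x
  exact ⟨c₀, (Q_iff hB hCU hx).2 ⟨hc₀, hmax⟩⟩

lemma Q_compact (hB : B.IsLegendre) (hCU : C ⊆ B.U) (hCcomp : IsCompact C)
    {x : EuclideanSpace ℝ (Fin J)} (hx : x ∈ B.dom) : IsCompact (B.Q C x) := by
  refine hCcomp.of_isClosed_subset ?_ Q_subset
  apply IsSeqClosed.isClosed
  intro u q hu hlim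
  have huC : ∀ n, u n ∈ C := fun n => (hu n).1
  have hqC : q ∈ C := hCcomp.isClosed.mem_of_tendsto hlim (Eventually.of_forall huC)
  refine (Q_iff hB hCU hx).2 ⟨hqC, fun c' hc' => ?_⟩
  have hlimU : Tendsto u atTop (𝓝[B.U] q) := by
    rw [tendsto_nhdsWithin_iff]
    exact ⟨hlim, Eventually.of_forall (fun n => hCU (huC n))⟩
  have hrr : Tendsto (fun n => B.rr x (u n)) atTop (𝓝 (B.rr x q)) :=
    ((rr_contOn_c hB x) q (hCU hqC)).tendsto.comp hlimU
  have hle : ∀ n, B.rr x c' ≤ B.rr x (u n) := fun n =>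
    ((Q_iff hB hCU hx).1 (hu n)).2 c' hc'
  exact ge_of_tendsto hrr (Eventually.of_forall hle)

end C
end BregmanSetup

namespace BregmanSetup

variable {J : ℕ} {B : BregmanSetup J} {C : Set (EuclideanSpace ℝ (Fin J))}

set_option maxHeartbeats 1000000 in
lemma key_directional (hB : B.IsLegendre) (hCne : C.Nonempty) (hCU : C ⊆ B.U)
    (hCcomp : IsCompact C) {x : EuclideanSpace ℝ (Fin J)} (hx : x ∈ B.U)
    {p : EuclideanSpace ℝ (Fin J)}
    (hp : ∀ z, B.F C x + ((inner ℝ p (z - x) : ℝ) : EReal) ≤ B.F C z)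
    (d : EuclideanSpace ℝ (Fin J)) :
    ∃ q ∈ B.Q C x, (inner ℝ p d : ℝ) + inner ℝ (B.grad q) d ≤ inner ℝ (B.grad x) d := by
  have hxd : x ∈ B.dom := U_subset_dom hx
  obtain ⟨c₀, hc₀, hmax₀⟩ := exists_max hB hCne hCU hCcomp x
  have hFx : B.F C x = (B.rr x c₀ : EReal) := F_eq_of_max hB hCU hxd hc₀ hmax₀
  have hmem : ∀ᶠ s in 𝓝 (0:ℝ), x + s • d ∈ B.U := by
    have hcont : Continuous fun s : ℝ => x + s • d := by continuity
    have h0 := hcont.tendsto 0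
    simp only [zero_smul, add_zero] at h0
    exact h0 (isOpen_U.mem_nhds hx)
  obtain ⟨δ, hδpos, hδ⟩ := Metric.eventually_nhds_iff.1 hmem
  set t : ℕ → ℝ := fun n => δ / (2 * (n + 1)) with ht
  have htpos : ∀ n, 0 < t n := fun n => by positivity
  have htlt : ∀ n, dist (t n) 0 < δ := by
    intro n
    rw [Real.dist_eq, sub_zero, abs_of_pos (htpos n)]
    rw [div_lt_iff₀ (by positivity)]
    nlinarith [hδpos, Nat.cast_nonneg (α := ℝ) n]
  have hzU : ∀ n, x + t n • d ∈ B.U := fun n => hδ (htlt n)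
  have htlim : Tendsto t atTop (𝓝 0) := by
    rw [ht]
    have : Tendsto (fun n : ℕ => 2 * ((n : ℝ) + 1)) atTop atTop := by
      apply Tendsto.const_mul_atTop two_pos
      exact tendsto_atTop_add_const_right _ 1 tendsto_natCast_atTop_atTop
    simpa using Tendsto.div_atTop tendsto_const_nhds this
  choose q hqC hqmax using fun n => exists_max hB hCne hCU hCcomp (x + t n • d)
  have hstar : ∀ n, (inner ℝ p d : ℝ) + inner ℝ (B.grad (q n)) d ≤
      slope (fun s => B.phi (x + s • d)) 0 (t n) := by
    intro n
    set zn := x + t n • d with hzn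
    have hzdom : zn ∈ B.dom := U_subset_dom (hzU n)
    have hFz : B.F C zn = (B.rr zn (q n) : EReal) :=
      F_eq_of_max hB hCU hzdom (hqC n) (hqmax n)
    have hsub := hp zn
    rw [hFx, hFz, ← EReal.coe_add, EReal.coe_le_coe_iff] at hsub
    have hinner : (inner ℝ p (zn - x) : ℝ) = t n * inner ℝ p d := by
      rw [hzn, add_sub_cancel_left, real_inner_smul_right]
    rw [hinner] at hsub
    have hexp : B.rr zn (q n) = B.rr x (q n) +
        (B.phi zn - B.phi x - t n * inner ℝ (B.grad (q n)) d) := by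
      rw [rr, rr, hzn]
      have h1 : x + t n • d - q n = (x - q n) + t n • d := by abel
      rw [h1, inner_add_right, real_inner_smul_right]
      ring
    have hle : B.rr x (q n) ≤ B.rr x c₀ := hmax₀ _ (hqC n)
    rw [slope_def_field]
    have hq0 : B.phi (x + (0:ℝ) • d) = B.phi x := by norm_num
    rw [hq0, sub_zero, le_div_iff₀ (htpos n)]
    rw [hexp] at hsub
    nlinarith [hsub, hle]
  obtain ⟨qs, hqsC, σ, hσmono, hσlim⟩ := hCcomp.tendsto_subseq hqC
  have htσ : Tendsto (fun k => t (σ k)) atTop (𝓝 0) :=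
    htlim.comp hσmono.tendsto_atTop
  have hslope : Tendsto (fun k => slope (fun s => B.phi (x + s • d)) 0 (t (σ k))) atTop
      (𝓝 (inner ℝ (B.grad x) d : ℝ)) := by
    have hd := hasDerivAt_iff_tendsto_slope.1 (dirDeriv hB hx d)
    apply hd.comp
    rw [tendsto_nhdsWithin_iff]
    exact ⟨htσ, Eventually.of_forall fun k => (htpos (σ k)).ne'⟩
  have hgradσ : Tendsto (fun k => B.grad (q (σ k))) atTop (𝓝 (B.grad (qs))) := by
    have := ((grad_contOn hB) qs (hCU hqsC)).tendsto
    apply this.comp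
    rw [tendsto_nhdsWithin_iff]
    exact ⟨hσlim, Eventually.of_forall fun k => hCU (hqC (σ k))⟩
  have hlhs : Tendsto (fun k => (inner ℝ p d : ℝ) + inner ℝ (B.grad (q (σ k))) d) atTop
      (𝓝 ((inner ℝ p d : ℝ) + inner ℝ (B.grad qs) d)) :=
    tendsto_const_nhds.add (hgradσ.inner tendsto_const_nhds)
  have hfinal : (inner ℝ p d : ℝ) + inner ℝ (B.grad qs) d ≤ inner ℝ (B.grad x) d :=
    le_of_tendsto_of_tendsto' hlhs hslope (fun k => hstar (σ k))
  refine ⟨qs, ?_, hfinal⟩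
  -- show qs ∈ Q C x
  refine (Q_iff hB hCU hxd).2 ⟨hqsC, fun c' hc' => ?_⟩
  have hzσ : Tendsto (fun k => x + t (σ k) • d) atTop (𝓝 x) := by
    have : Tendsto (fun k => t (σ k) • d) atTop (𝓝 ((0:ℝ) • d)) :=
      htσ.smul tendsto_const_nhds
    simpa using tendsto_const_nhds.add this
  have hφz : Tendsto (fun k => B.phi (x + t (σ k) • d)) atTop (𝓝 (B.phi x)) :=
    (phi_contAt hB hx).tendsto.comp hzσ
  have hφq : Tendsto (fun k => B.phi (q (σ k))) atTop (𝓝 (B.phi qs)) :=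
    (phi_contAt hB (hCU hqsC)).tendsto.comp hσlim
  have h1 : Tendsto (fun k => B.rr (x + t (σ k) • d) (q (σ k))) atTop (𝓝 (B.rr x qs)) := by
    simp only [rr]
    exact (hφz.sub hφq).sub (hgradσ.inner (hzσ.sub hσlim))
  have h2 : Tendsto (fun k => B.rr (x + t (σ k) • d) c') atTop (𝓝 (B.rr x c')) := by
    simp only [rr]
    exact (hφz.sub tendsto_const_nhds).sub
      (tendsto_const_nhds.inner (hzσ.sub tendsto_const_nhds))
  exact le_of_tendsto_of_tendsto' h2 h1 (fun k => hqmax (σ k) c' hc')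

end BregmanSetup

variable {J : ℕ}

local notation "E" => EuclideanSpace ℝ (Fin J)

lemma isCompact_convexHull_aux {s : Set (EuclideanSpace ℝ (Fin J))} (hs : IsCompact s) :
    IsCompact (convexHull ℝ s) := by
  rcases s.eq_empty_or_nonempty with rfl | ⟨c, hc⟩
  · simpa using isCompact_empty
  classical
  set n := J + 1 with hn
  set T : Set ((Fin n → ℝ) × (Fin n → E)) :=
    (stdSimplex ℝ (Fin n)) ×ˢ (Set.univ.pi fun _ => s) with hT
  have hTcomp : IsCompact T :=
    (isCompact_stdSimplex ℝ _).prod (isCompact_univ_pi fun _ => hs)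
  have hcont : Continuous fun q : (Fin n → ℝ) × (Fin n → E) => ∑ i, q.1 i • q.2 i :=
    continuous_finset_sum _ fun i _ =>
      ((continuous_apply i).comp continuous_fst).smul ((continuous_apply i).comp continuous_snd)
  have himage : (fun q : (Fin n → ℝ) × (Fin n → E) => ∑ i, q.1 i • q.2 i) '' T
      = convexHull ℝ s := by
    apply Subset.antisymm
    · rintro _ ⟨⟨w, v⟩, ⟨⟨hw0, hw1⟩, hv⟩, rfl⟩
      exact (convex_convexHull ℝ s).sum_mem (fun i _ => hw0 i) hw1
        (fun i _ => subset_convexHull ℝ s (hv i (Set.mem_univ i)))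
    · intro x hx
      obtain ⟨ι, hι, z, w, hzs, hzai, hw0, hw1, hwx⟩ :=
        eq_pos_convex_span_of_mem_convexHull hx
      have hcard : Fintype.card ι ≤ n := by
        rcases isEmpty_or_nonempty ι with h | h
        · simp [Fintype.card_eq_zero]
        · have := hzai.finrank_vectorSpan_add_one
          have hle : Module.finrank ℝ (vectorSpan ℝ (Set.range z)) ≤ J := by
            simpa [finrank_euclideanSpace_fin] using
              (Submodule.finrank_le (vectorSpan ℝ (Set.range z)))
          omega
      obtain ⟨e⟩ : Nonempty (ι ↪ Fin n) := by
        rw [Function.Embedding.nonempty_iff_card_le]; simpa using hcard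
      set w' : Fin n → ℝ := Function.extend e w 0 with hw'
      set v' : Fin n → E := Function.extend e z (fun _ => c) with hv'
      refine ⟨(w', v'), ⟨⟨?_, ?_⟩, ?_⟩, ?_⟩
      · intro j
        rcases em (∃ i, e i = j) with ⟨i, rfl⟩ | hj
        · simpa [hw', e.injective.extend_apply] using (hw0 i).le
        · simp [hw', Function.extend_apply' _ _ _ hj]
      · have : ∑ j, w' j = ∑ j ∈ Finset.univ.map e, w' j := by
          refine (Finset.sum_subset (Finset.subset_univ _) ?_).symm
          intro j _ hj
          have : ¬ ∃ i, e i = j := by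
            rintro ⟨i, rfl⟩
            exact hj (Finset.mem_map_of_mem _ (Finset.mem_univ i))
          simp [hw', Function.extend_apply' _ _ _ this]
        rw [this, Finset.sum_map]
        simpa [hw', e.injective.extend_apply] using hw1
      · intro j _
        rcases em (∃ i, e i = j) with ⟨i, rfl⟩ | hj
        · simpa [hv', e.injective.extend_apply] using hzs (Set.mem_range_self i)
        · simpa [hv', Function.extend_apply' _ _ _ hj] using hc
      · show ∑ j, w' j • v' j = x
        have : ∑ j, w' j • v' j = ∑ j ∈ Finset.univ.map e, w' j • v' j := by
          refine (Finset.sum_subset (Finset.subset_univ _) ?_).symm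
          intro j _ hj
          have : ¬ ∃ i, e i = j := by
            rintro ⟨i, rfl⟩
            exact hj (Finset.mem_map_of_mem _ (Finset.mem_univ i))
          simp [hw', Function.extend_apply' _ _ _ this]
        rw [this, Finset.sum_map]
        simpa [hw', hv', e.injective.extend_apply] using hwx
  rw [← himage]
  exact hTcomp.image hcont

open BregmanSetup

/-- The convex subdifferential of an extended-real-valued function. -/
def subdiff {J : ℕ} (g : EuclideanSpace ℝ (Fin J) → EReal) (x : EuclideanSpace ℝ (Fin J)) : Set (EuclideanSpace ℝ (Fin J)) :=
  {p | g x ≠ ⊤ ∧ ∀ z, g x + ((inner ℝ p (z - x) : ℝ) : EReal) ≤ g z}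

/-- **Subdifferential of the farthest-distance function** (Theorem 4.3): for
`C ⊆ U` nonempty compact and `x ∈ U`,
`∂F_C(x) = ∇f(x) - conv ∇f(Q_C(x))`. -/
theorem farthest_distance_subdifferential {J : ℕ} (B : BregmanSetup J)
    (hB : B.IsLegendre) (C : Set (EuclideanSpace ℝ (Fin J))) (hCne : C.Nonempty) (hCU : C ⊆ B.U)
    (hCcomp : IsCompact C) (x : EuclideanSpace ℝ (Fin J)) (hx : x ∈ B.U) :
    subdiff (B.F C) x =
      (fun p => B.grad x - p) '' convexHull ℝ (B.grad '' B.Q C x) := by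
  have hxd : x ∈ B.dom := U_subset_dom hx
  obtain ⟨c₀, hc₀, hmax₀⟩ := exists_max hB hCne hCU hCcomp x
  have hFx : B.F C x = (B.rr x c₀ : EReal) := F_eq_of_max hB hCU hxd hc₀ hmax₀
  apply Subset.antisymm
  · rintro p ⟨hpne, hp⟩
    set v := B.grad x - p with hv
    refine ⟨v, ?_, by show B.grad x - (B.grad x - p) = p; rw [sub_sub_cancel]⟩
    by_contra hvK
    have hQcomp : IsCompact (B.Q C x) := Q_compact hB hCU hCcomp hxd
    have hQU : B.Q C x ⊆ B.U := Q_subset.trans hCU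
    have hgQ : IsCompact (B.grad '' B.Q C x) :=
      hQcomp.image_of_continuousOn ((grad_contOn hB).mono hQU)
    have hKcomp : IsCompact (convexHull ℝ (B.grad '' B.Q C x)) := isCompact_convexHull_aux hgQ
    obtain ⟨ℓ, u, hℓK, hℓv⟩ :=
      geometric_hahn_banach_closed_point (convex_convexHull ℝ _) hKcomp.isClosed hvK
    set d : EuclideanSpace ℝ (Fin J) := (InnerProductSpace.toDual ℝ _).symm ℓ with hddef
    have hd : ∀ w, (inner ℝ d w : ℝ) = ℓ w := fun w => InnerProductSpace.toDual_symm_apply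
    obtain ⟨qd, hqd, hqdle⟩ := key_directional hB hCne hCU hCcomp hx hp (-d)
    have hneg : -(inner ℝ p d : ℝ) + -(inner ℝ (B.grad qd) d) ≤ -(inner ℝ (B.grad x) d) := by
      simpa [inner_neg_right] using hqdle
    have hℓ1 : (inner ℝ d (B.grad qd) : ℝ) < u := by
      rw [hd]; exact hℓK _ (subset_convexHull ℝ _ (mem_image_of_mem _ hqd))
    have hℓ2 : u < (inner ℝ d v : ℝ) := by rw [hd]; exact hℓv
    have e1 : (inner ℝ d v : ℝ) = inner ℝ d (B.grad x) - inner ℝ d p := by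
      rw [hv, inner_sub_right]
    have e2 : (inner ℝ d (B.grad x) : ℝ) = inner ℝ (B.grad x) d := real_inner_comm _ _
    have e3 : (inner ℝ d p : ℝ) = inner ℝ p d := real_inner_comm _ _
    have e4 : (inner ℝ d (B.grad qd) : ℝ) = inner ℝ (B.grad qd) d := real_inner_comm _ _
    linarith
  · rintro _ ⟨w, hwK, rfl⟩
    constructor
    · rw [hFx]; exact EReal.coe_ne_top _
    intro z
    by_cases hzdom : z ∈ B.dom
    · obtain ⟨c₁, hc₁, hmax₁⟩ := exists_max hB hCne hCU hCcomp z
      have hFz : B.F C z = (B.rr z c₁ : EReal) := F_eq_of_max hB hCU hzdom hc₁ hmax₁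
      rw [hFx, hFz, ← EReal.coe_add, EReal.coe_le_coe_iff]
      have hlin : IsLinearMap ℝ (fun w' : EuclideanSpace ℝ (Fin J) => (inner ℝ w' (x - z) : ℝ)) :=
        ⟨fun a b => inner_add_left _ _ _, fun c a => real_inner_smul_left _ _ _⟩
      set S := {w' : EuclideanSpace ℝ (Fin J) |
        (inner ℝ w' (x - z) : ℝ) ≤ B.rr z c₁ - B.rr x c₀ - inner ℝ (B.grad x) (z - x)} with hS
      have hconv : Convex ℝ S := convex_halfSpace_le hlin _
      have hsub : B.grad '' B.Q C x ⊆ S := by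
        rintro _ ⟨qq, hqq, rfl⟩
        have hqqC : qq ∈ C := hqq.1
        have hqx : B.rr x qq = B.rr x c₀ :=
          le_antisymm (hmax₀ _ hqqC) (((Q_iff hB hCU hxd).1 hqq).2 c₀ hc₀)
        have hgi := grad_ineq hB hx hzdom
        have hrr : B.rr z qq ≤ B.rr z c₁ := hmax₁ _ hqqC
        have hexp : B.rr z qq =
            B.rr x qq + (B.phi z - B.phi x - inner ℝ (B.grad qq) (z - x)) := by
          rw [rr, rr]
          have h1 : (inner ℝ (B.grad qq) (z - qq) : ℝ) - inner ℝ (B.grad qq) (x - qq)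
              = inner ℝ (B.grad qq) (z - x) := by
            rw [← inner_sub_right]
            congr 1
            abel
          linarith [h1]
        have e2 : (inner ℝ (B.grad qq) (x - z) : ℝ) = -inner ℝ (B.grad qq) (z - x) := by
          rw [show x - z = -(z - x) by abel, inner_neg_right]
        simp only [hS, mem_setOf_eq]
        rw [e2]
        linarith
      have hwS := convexHull_min hsub hconv hwK
      simp only [hS, mem_setOf_eq] at hwS
      have e1 : (inner ℝ (B.grad x - w) (z - x) : ℝ)
          = inner ℝ (B.grad x) (z - x) - inner ℝ w (z - x) := inner_sub_left _ _ _
      have e2 : (inner ℝ w (x - z) : ℝ) = -inner ℝ w (z - x) := by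
        rw [show x - z = -(z - x) by abel, inner_neg_right]
      rw [e2] at hwS
      linarith [hwS, e1]
    · rw [F_top hB hCne hCU hzdom]
      exact le_top
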